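/- arXiv:2503.14981 — 3 statements merged into one kernel-verified Lean document; each statement's English description precedes it below -/
import Mathlib

section
/- (Subdifferential of a spectral function, membership characterization.) Let 𝔥 be a Euclidean space with spectral decomposition system (𝒳, S, γ, (Λ_a)_{a∈A}), let φ : 𝒳 → (−∞, +∞] be proper (not identically +∞) and S-invariant (φ(s • x) = φ(x) for all s ∈ S, x ∈ 𝒳), and let X, Y ∈ 𝔥. Then Y ∈ ∂(φ ∘ γ)(X) if and only if γ(Y) ∈ ∂φ(γ(X)) and there exists a ∈ A with X = Λ_a(γ(X)) and Y = Λ_a(γ(Y)). Here, for a proper function f : 𝓗 → (−∞, +∞] on a Euclidean space 𝓗, the convex subdifferential is ∂f(x) = { y ∈ 𝓗 : for all z ∈ 𝓗, ⟨z − x, y⟩ + f(x) ≤ f(z) }. -/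
open scoped InnerProductSpace

/-- A spectral decomposition system `(𝓧, S, γ, (Λ a)_{a ∈ A})` for a Euclidean space `𝓗`,
with spectral-induced ordering mapping `τ`. -/
structure SpectralDecompositionSystem
    (𝓗 : Type*) (𝓧 : Type*) [NormedAddCommGroup 𝓗] [InnerProductSpace ℝ 𝓗]
    [NormedAddCommGroup 𝓧] [InnerProductSpace ℝ 𝓧]
    (S : Type*) [Group S] [MulAction S 𝓧]
    {A : Type*} (γ : 𝓗 → 𝓧) (Λ : A → 𝓧 →ₗ[ℝ] 𝓗) (τ : 𝓧 → 𝓧) : Prop where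
  /-- `S` acts on `𝓧` by linear maps. -/
  smul_add_smul : ∀ (s : S) (c : ℝ) (x y : 𝓧), s • (c • x + y) = c • (s • x) + s • y
  /-- `S` acts on `𝓧` by isometries. -/
  norm_smul : ∀ (s : S) (x : 𝓧), ‖s • x‖ = ‖x‖
  /-- Each `Λ a` is a (linear) isometry. -/
  norm_lambda : ∀ (a : A) (x : 𝓧), ‖Λ a x‖ = ‖x‖
  /-- `τ` is `S`-invariant. -/
  tau_smul : ∀ (s : S) (x : 𝓧), τ (s • x) = τ x
  /-- `τ x` belongs to the orbit `S • x`. -/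
  tau_orbit : ∀ x : 𝓧, ∃ s : S, τ x = s • x
  /-- `γ ∘ Λ a = τ` for all `a ∈ A`. -/
  gamma_lambda : ∀ (a : A) (x : 𝓧), γ (Λ a x) = τ x
  /-- Every element of `𝓗` admits a spectral decomposition. -/
  exists_decomp : ∀ Z : 𝓗, ∃ a : A, Z = Λ a (γ Z)
  /-- Von Neumann-type trace inequality. -/
  inner_le : ∀ Z W : 𝓗, ⟪Z, W⟫_ℝ ≤ ⟪γ Z, γ W⟫_ℝ

variable {𝓗 𝓧 : Type*} [NormedAddCommGroup 𝓗] [InnerProductSpace ℝ 𝓗]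
  [FiniteDimensional ℝ 𝓗] [NormedAddCommGroup 𝓧] [InnerProductSpace ℝ 𝓧]
  [FiniteDimensional ℝ 𝓧] {S : Type*} [Group S] [MulAction S 𝓧]
  {A : Type*} [Nonempty A]

/-- The convex subdifferential of an extended-real-valued function on a Euclidean space. -/
def subdifferential {V : Type*} [NormedAddCommGroup V] [InnerProductSpace ℝ V]
    (f : V → EReal) (x : V) : Set V :=
  {y | ∀ z : V, ((⟪z - x, y⟫_ℝ : ℝ) : EReal) + f x ≤ f z}

namespace SpectralDecompositionSystem

variable {γ : 𝓗 → 𝓧} {Λ : A → 𝓧 →ₗ[ℝ] 𝓗} {τ : 𝓧 → 𝓧}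

/-- Each `Λ a` preserves inner products. -/
lemma inner_lambda (hsys : SpectralDecompositionSystem 𝓗 𝓧 S γ Λ τ) (a : A) (x y : 𝓧) :
    ⟪Λ a x, Λ a y⟫_ℝ = ⟪x, y⟫_ℝ :=
  LinearIsometry.inner_map_map ⟨Λ a, hsys.norm_lambda a⟩ x y

/-- `γ` preserves norms. -/
lemma norm_gamma (hsys : SpectralDecompositionSystem 𝓗 𝓧 S γ Λ τ) (Z : 𝓗) :
    ‖γ Z‖ = ‖Z‖ := by
  obtain ⟨a, ha⟩ := hsys.exists_decomp Z
  conv_rhs => rw [ha]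
  rw [hsys.norm_lambda]

/-- Elements of the range of `γ` are fixed by `τ`. -/
lemma tau_gamma (hsys : SpectralDecompositionSystem 𝓗 𝓧 S γ Λ τ) (Z : 𝓗) :
    τ (γ Z) = γ Z := by
  obtain ⟨a, ha⟩ := hsys.exists_decomp Z
  conv_rhs => rw [ha, hsys.gamma_lambda]

/-- `φ` takes the same value on `τ x` as on `x`. -/
lemma phi_tau (hsys : SpectralDecompositionSystem 𝓗 𝓧 S γ Λ τ)
    (φ : 𝓧 → EReal) (hφ : ∀ (s : S) (x : 𝓧), φ (s • x) = φ x) (x : 𝓧) :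
    φ (τ x) = φ x := by
  obtain ⟨s, hs⟩ := hsys.tau_orbit x
  rw [hs, hφ]

/-- Equality in the trace inequality implies a simultaneous spectral decomposition. -/
lemma exists_simul (hsys : SpectralDecompositionSystem 𝓗 𝓧 S γ Λ τ) (Z Y : 𝓗)
    (h : ⟪Z, Y⟫_ℝ = ⟪γ Z, γ Y⟫_ℝ) :
    ∃ a : A, Z = Λ a (γ Z) ∧ Y = Λ a (γ Y) := by
  obtain ⟨a, ha⟩ := hsys.exists_decomp (Z + Y)
  refine ⟨a, ?_⟩
  set u : 𝓧 := γ (Z + Y) with hu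
  have hnu : ‖u‖ = ‖Z + Y‖ := hsys.norm_gamma (Z + Y)
  have hnZ : ‖γ Z‖ = ‖Z‖ := hsys.norm_gamma Z
  have hnY : ‖γ Y‖ = ‖Y‖ := hsys.norm_gamma Y
  -- `γ (Z + Y) = γ Z + γ Y` under the equality hypothesis
  have hnv : ‖γ Z + γ Y‖ ^ 2 = ‖Z + Y‖ ^ 2 := by
    rw [norm_add_sq_real, norm_add_sq_real, hnZ, hnY, h]
  have hCS : ⟪u, γ Z + γ Y⟫_ℝ ≤ ‖Z + Y‖ ^ 2 := by
    calc ⟪u, γ Z + γ Y⟫_ℝ ≤ ‖u‖ * ‖γ Z + γ Y‖ := real_inner_le_norm _ _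
    _ = ‖Z + Y‖ ^ 2 := by
        rw [hnu]
        rw [show ‖γ Z + γ Y‖ = ‖Z + Y‖ from by
          have := hnv
          nlinarith [norm_nonneg (γ Z + γ Y), norm_nonneg (Z + Y)]]
        ring
  have hlow : ‖Z + Y‖ ^ 2 ≤ ⟪u, γ Z + γ Y⟫_ℝ := by
    have h1 := hsys.inner_le (Z + Y) Z
    have h2 := hsys.inner_le (Z + Y) Y
    have : ⟪Z + Y, Z⟫_ℝ + ⟪Z + Y, Y⟫_ℝ = ‖Z + Y‖ ^ 2 := by
      rw [← inner_add_right, real_inner_self_eq_norm_sq]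
    rw [inner_add_right]
    linarith
  have heq : ⟪u, γ Z + γ Y⟫_ℝ = ‖Z + Y‖ ^ 2 := le_antisymm hCS hlow
  have huv : u = γ Z + γ Y := by
    have : ‖u - (γ Z + γ Y)‖ ^ 2 = 0 := by
      rw [norm_sub_sq_real, hnu, heq, hnv]; ring
    have := pow_eq_zero_iff (n := 2) (by norm_num) |>.mp this
    rwa [norm_eq_zero, sub_eq_zero] at this
  -- so `Λ a (γ Z) + Λ a (γ Y) = Z + Y`
  have hsum : Λ a (γ Z) + Λ a (γ Y) = Z + Y := by
    rw [← map_add, ← huv]; exact ha.symm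
  -- the four cross inequalities
  have hZZ' : ⟪Z, Λ a (γ Z)⟫_ℝ ≤ ‖Z‖ ^ 2 := by
    have := hsys.inner_le Z (Λ a (γ Z))
    rw [hsys.gamma_lambda, hsys.tau_gamma, real_inner_self_eq_norm_sq, hnZ] at this
    exact this
  have hYY' : ⟪Y, Λ a (γ Y)⟫_ℝ ≤ ‖Y‖ ^ 2 := by
    have := hsys.inner_le Y (Λ a (γ Y))
    rw [hsys.gamma_lambda, hsys.tau_gamma, real_inner_self_eq_norm_sq, hnY] at this
    exact this
  have hZY' : ⟪Z, Λ a (γ Y)⟫_ℝ ≤ ⟪Z, Y⟫_ℝ := by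
    have := hsys.inner_le Z (Λ a (γ Y))
    rw [hsys.gamma_lambda, hsys.tau_gamma] at this
    linarith [h]
  have hYZ' : ⟪Y, Λ a (γ Z)⟫_ℝ ≤ ⟪Z, Y⟫_ℝ := by
    have := hsys.inner_le Y (Λ a (γ Z))
    rw [hsys.gamma_lambda, hsys.tau_gamma] at this
    have hc : ⟪γ Y, γ Z⟫_ℝ = ⟪Z, Y⟫_ℝ := by rw [real_inner_comm]; exact h.symm
    linarith
  -- total equality
  have htot : ⟪Z, Λ a (γ Z)⟫_ℝ + ⟪Z, Λ a (γ Y)⟫_ℝ + ⟪Y, Λ a (γ Z)⟫_ℝ + ⟪Y, Λ a (γ Y)⟫_ℝ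
      = ‖Z‖ ^ 2 + 2 * ⟪Z, Y⟫_ℝ + ‖Y‖ ^ 2 := by
    have : ⟪Z + Y, Λ a (γ Z) + Λ a (γ Y)⟫_ℝ = ‖Z + Y‖ ^ 2 := by
      rw [hsum, real_inner_self_eq_norm_sq]
    rw [inner_add_left, inner_add_right, inner_add_right] at this
    rw [norm_add_sq_real] at this
    linarith
  have heZ : ⟪Z, Λ a (γ Z)⟫_ℝ = ‖Z‖ ^ 2 := by linarith
  have heY : ⟪Y, Λ a (γ Y)⟫_ℝ = ‖Y‖ ^ 2 := by linarith
  have hna : ‖Λ a (γ Z)‖ = ‖Z‖ := by rw [hsys.norm_lambda, hnZ]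
  have hnb : ‖Λ a (γ Y)‖ = ‖Y‖ := by rw [hsys.norm_lambda, hnY]
  constructor
  · have : ‖Z - Λ a (γ Z)‖ ^ 2 = 0 := by rw [norm_sub_sq_real, heZ, hna]; ring
    have := pow_eq_zero_iff (n := 2) (by norm_num) |>.mp this
    rwa [norm_eq_zero, sub_eq_zero] at this
  · have : ‖Y - Λ a (γ Y)‖ ^ 2 = 0 := by rw [norm_sub_sq_real, heY, hnb]; ring
    have := pow_eq_zero_iff (n := 2) (by norm_num) |>.mp this
    rwa [norm_eq_zero, sub_eq_zero] at this

end SpectralDecompositionSystem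

/-- Subdifferential of a spectral function, membership characterization. -/
theorem spectral_function_mem_subdifferential_iff
    (γ : 𝓗 → 𝓧) (Λ : A → 𝓧 →ₗ[ℝ] 𝓗) (τ : 𝓧 → 𝓧)
    (hsys : SpectralDecompositionSystem 𝓗 𝓧 S γ Λ τ)
    (φ : 𝓧 → EReal) (hproper : ∃ x, φ x ≠ ⊤) (hbot : ∀ x, φ x ≠ ⊥)
    (hφ : ∀ (s : S) (x : 𝓧), φ (s • x) = φ x) (Z Y : 𝓗) :
    Y ∈ subdifferential (fun W => φ (γ W)) Z ↔
      (γ Y ∈ subdifferential φ (γ Z) ∧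
        ∃ a : A, Z = Λ a (γ Z) ∧ Y = Λ a (γ Y)) := by
  constructor
  · intro hY
    -- first: φ (γ Z) ≠ ⊤
    obtain ⟨x₀, hx₀⟩ := hproper
    obtain ⟨b⟩ := ‹Nonempty A›
    have hψ : φ (γ (Λ b x₀)) ≠ ⊤ := by
      rw [hsys.gamma_lambda, hsys.phi_tau φ hφ]; exact hx₀
    have hfin : φ (γ Z) ≠ ⊤ := by
      intro htop
      have := hY (Λ b x₀)
      dsimp only at this
      rw [htop] at this
      simp only [EReal.add_top_of_ne_bot (EReal.coe_ne_bot _), top_le_iff] at this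
      exact hψ this
    set c : ℝ := (φ (γ Z)).toReal with hc
    have hcoe : ((c : ℝ) : EReal) = φ (γ Z) := EReal.coe_toReal hfin (hbot _)
    -- equality in the trace inequality
    obtain ⟨a₀, ha₀⟩ := hsys.exists_decomp Y
    have hkey : ⟪Z, Y⟫_ℝ = ⟪γ Z, γ Y⟫_ℝ := by
      have hsub := hY (Λ a₀ (γ Z))
      dsimp only at hsub
      have hγW : γ (Λ a₀ (γ Z)) = γ Z := by rw [hsys.gamma_lambda, hsys.tau_gamma]
      rw [hγW, ← hcoe, ← EReal.coe_add, EReal.coe_le_coe_iff] at hsub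
      have hWY : ⟪Λ a₀ (γ Z), Y⟫_ℝ = ⟪γ Z, γ Y⟫_ℝ := by
        conv_lhs => rw [ha₀]
        exact hsys.inner_lambda a₀ (γ Z) (γ Y)
      rw [inner_sub_left, hWY] at hsub
      have := hsys.inner_le Z Y
      linarith
    obtain ⟨a, haZ, haY⟩ := hsys.exists_simul Z Y hkey
    refine ⟨?_, a, haZ, haY⟩
    intro x
    have hsub := hY (Λ a x)
    dsimp only at hsub
    have hγW : φ (γ (Λ a x)) = φ x := by rw [hsys.gamma_lambda, hsys.phi_tau φ hφ]
    rw [hγW] at hsub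
    have hWY : ⟪Λ a x, Y⟫_ℝ = ⟪x, γ Y⟫_ℝ := by
      conv_lhs => rw [haY]
      exact hsys.inner_lambda a x (γ Y)
    have hIN : ⟪Λ a x - Z, Y⟫_ℝ = ⟪x - γ Z, γ Y⟫_ℝ := by
      rw [inner_sub_left, inner_sub_left, hWY, hkey]
    rwa [hIN] at hsub
  · rintro ⟨hsub, a, haZ, haY⟩
    intro W
    have hZY : ⟪Z, Y⟫_ℝ = ⟪γ Z, γ Y⟫_ℝ := by
      conv_lhs => rw [haZ, haY]
      exact hsys.inner_lambda a (γ Z) (γ Y)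
    have hle : ⟪W - Z, Y⟫_ℝ ≤ ⟪γ W - γ Z, γ Y⟫_ℝ := by
      rw [inner_sub_left, inner_sub_left, hZY]
      have := hsys.inner_le W Y
      linarith
    calc ((⟪W - Z, Y⟫_ℝ : ℝ) : EReal) + φ (γ Z)
        ≤ ((⟪γ W - γ Z, γ Y⟫_ℝ : ℝ) : EReal) + φ (γ Z) :=
          add_le_add_left (EReal.coe_le_coe_iff.mpr hle) _
      _ ≤ φ (γ W) := hsub (γ W)
end

section
/- (Subdifferential of a spectral function, set formula.) Let 𝔥 be a Euclidean space with spectral decomposition system (𝒳, S, γ, (Λ_a)_{a∈A}), let φ : 𝒳 → (−∞, +∞] be proper (not identically +∞) and S-invariant (φ(s • x) = φ(x) for all s ∈ S, x ∈ 𝒳), and let X ∈ 𝔥. Set A_X = {a ∈ A : X = Λ_a(γ(X))}. Then: (i) ∂(φ ∘ γ)(X) = { Λ_a y : y ∈ ∂φ(γ(X)), a ∈ A_X }; and (ii) ∂(φ ∘ γ)(X) is a singleton if and only if ∂φ(γ(X)) is a singleton. Here, for a proper function f : 𝓗 → (−∞, +∞] on a Euclidean space 𝓗, the convex subdifferential is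 ∂f(x) = { y ∈ 𝓗 : for all z ∈ 𝓗, ⟨z − x, y⟩ + f(x) ≤ f(z) }. -/
open scoped InnerProductSpace

section helpers
variable {𝓗 𝓧 : Type*} [NormedAddCommGroup 𝓗] [InnerProductSpace ℝ 𝓗]
  [NormedAddCommGroup 𝓧] [InnerProductSpace ℝ 𝓧]
  {S : Type*} [Group S] [MulAction S 𝓧] {A : Type*}
  {γ : 𝓗 → 𝓧} {Λ : A → 𝓧 →ₗ[ℝ] 𝓗} {τ : 𝓧 → 𝓧}
  (hsys : SpectralDecompositionSystem 𝓗 𝓧 S γ Λ τ)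
include hsys

lemma sds_inner_lambda (a : A) (x y : 𝓧) : ⟪Λ a x, Λ a y⟫_ℝ = ⟪x, y⟫_ℝ :=
  LinearIsometry.inner_map_map ⟨Λ a, hsys.norm_lambda a⟩ x y

lemma sds_smul_zero (s : S) : s • (0 : 𝓧) = 0 := by
  have h := hsys.smul_add_smul s 1 0 0
  simp only [one_smul, add_zero] at h
  have h2 : s • (0:𝓧) + 0 = s • (0:𝓧) + s • (0:𝓧) := by rw [add_zero]; exact h
  exact (add_left_cancel h2).symm

lemma sds_smul_add (s : S) (x y : 𝓧) : s • (x + y) = s • x + s • y := by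
  have h := hsys.smul_add_smul s 1 x y
  simpa [one_smul] using h

lemma sds_smul_rsmul (s : S) (c : ℝ) (x : 𝓧) : s • (c • x) = c • (s • x) := by
  have h := hsys.smul_add_smul s c x 0
  simpa [sds_smul_zero hsys] using h

lemma sds_inner_smul (s : S) (x y : 𝓧) : ⟪s • x, s • y⟫_ℝ = ⟪x, y⟫_ℝ := by
  have : ∀ z : 𝓧, ‖(⟨⟨⟨fun z => s • z, sds_smul_add hsys s⟩, sds_smul_rsmul hsys s⟩,
      hsys.norm_smul s⟩ : 𝓧 →ₗᵢ[ℝ] 𝓧) z‖ = ‖z‖ := hsys.norm_smul s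
  exact LinearIsometry.inner_map_map
    (⟨⟨⟨fun z => s • z, sds_smul_add hsys s⟩, sds_smul_rsmul hsys s⟩, hsys.norm_smul s⟩ :
      𝓧 →ₗᵢ[ℝ] 𝓧) x y

lemma sds_norm_gamma (V : 𝓗) : ‖γ V‖ = ‖V‖ := by
  obtain ⟨a, ha⟩ := hsys.exists_decomp V
  conv_rhs => rw [ha]
  rw [hsys.norm_lambda]

lemma sds_tau_gamma (V : 𝓗) : τ (γ V) = γ V := by
  obtain ⟨a, ha⟩ := hsys.exists_decomp V
  conv_rhs => rw [ha, hsys.gamma_lambda]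

/-- Simultaneous spectral decomposition in the equality case. -/
lemma sds_simultaneous (Z W : 𝓗) (h : ⟪γ Z, γ W⟫_ℝ ≤ ⟪Z, W⟫_ℝ) :
    ∃ a : A, Z = Λ a (γ Z) ∧ W = Λ a (γ W) := by
  have heq : ⟪Z, W⟫_ℝ = ⟪γ Z, γ W⟫_ℝ := le_antisymm (hsys.inner_le Z W) h
  -- Step 1 : γ (Z + W) = γ Z + γ W
  have h1 : ⟪Z + W, Z⟫_ℝ ≤ ⟪γ (Z + W), γ Z⟫_ℝ := hsys.inner_le _ _
  have h2 : ⟪Z + W, W⟫_ℝ ≤ ⟪γ (Z + W), γ W⟫_ℝ := hsys.inner_le _ _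
  have hnZ : ‖γ Z‖ = ‖Z‖ := sds_norm_gamma hsys Z
  have hnW : ‖γ W‖ = ‖W‖ := sds_norm_gamma hsys W
  have hnZW : ‖γ (Z + W)‖ = ‖Z + W‖ := sds_norm_gamma hsys (Z + W)
  have hstep1 : γ (Z + W) = γ Z + γ W := by
    have hexp : ‖γ (Z + W) - (γ Z + γ W)‖ ^ 2 ≤ 0 := by
      rw [norm_sub_sq_real]
      rw [inner_add_right, norm_add_sq_real, hnZ, hnW, hnZW, norm_add_sq_real]
      rw [inner_add_left, real_inner_self_eq_norm_sq] at h1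
      rw [inner_add_left, real_inner_self_eq_norm_sq] at h2
      have hc1 : ⟪W, Z⟫_ℝ = ⟪Z, W⟫_ℝ := real_inner_comm Z W
      nlinarith [h1, h2, heq, hc1]
    have h0 : ‖γ (Z + W) - (γ Z + γ W)‖ ^ 2 = 0 := le_antisymm hexp (sq_nonneg _)
    have h0' : ‖γ (Z + W) - (γ Z + γ W)‖ = 0 := by
      have := sq_eq_zero_iff.mp h0; exact this
    exact sub_eq_zero.mp (norm_eq_zero.mp h0')
  obtain ⟨a, ha⟩ := hsys.exists_decomp (Z + W)
  rw [hstep1, map_add] at ha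
  have hZeq : Z = Λ a (γ Z) := by
    have hα : ⟪Z, Λ a (γ Z)⟫_ℝ ≤ ‖Z‖ ^ 2 := by
      calc ⟪Z, Λ a (γ Z)⟫_ℝ ≤ ⟪γ Z, γ (Λ a (γ Z))⟫_ℝ := hsys.inner_le _ _
        _ = ⟪γ Z, γ Z⟫_ℝ := by rw [hsys.gamma_lambda, sds_tau_gamma hsys]
        _ = ‖Z‖ ^ 2 := by rw [real_inner_self_eq_norm_sq, hnZ]
    have hβ : ⟪W, Λ a (γ Z)⟫_ℝ ≤ ⟪Z, W⟫_ℝ := by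
      calc ⟪W, Λ a (γ Z)⟫_ℝ ≤ ⟪γ W, γ (Λ a (γ Z))⟫_ℝ := hsys.inner_le _ _
        _ = ⟪γ W, γ Z⟫_ℝ := by rw [hsys.gamma_lambda, sds_tau_gamma hsys]
        _ = ⟪Z, W⟫_ℝ := by rw [heq]; exact real_inner_comm _ _
    have hsum : ⟪Z, Λ a (γ Z)⟫_ℝ + ⟪W, Λ a (γ Z)⟫_ℝ = ‖Z‖ ^ 2 + ⟪Z, W⟫_ℝ := by
      have : ⟪Z + W, Λ a (γ Z)⟫_ℝ = ⟪Λ a (γ Z) + Λ a (γ W), Λ a (γ Z)⟫_ℝ := by rw [← ha]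
      rw [inner_add_left, inner_add_left, sds_inner_lambda hsys, sds_inner_lambda hsys] at this
      rw [this, real_inner_self_eq_norm_sq, hnZ, heq]
      congr 1
      exact real_inner_comm _ _
    have hα' : ⟪Z, Λ a (γ Z)⟫_ℝ = ‖Z‖ ^ 2 := by linarith
    have hz : ‖Z - Λ a (γ Z)‖ ^ 2 = 0 := by
      rw [norm_sub_sq_real, hα', hsys.norm_lambda, hnZ]; ring
    exact sub_eq_zero.mp (norm_eq_zero.mp (sq_eq_zero_iff.mp hz))
  refine ⟨a, hZeq, ?_⟩
  rw [← hZeq] at ha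
  exact add_left_cancel ha
end helpers

variable {𝓗 𝓧 : Type*} [NormedAddCommGroup 𝓗] [InnerProductSpace ℝ 𝓗]
  [FiniteDimensional ℝ 𝓗] [NormedAddCommGroup 𝓧] [InnerProductSpace ℝ 𝓧]
  [FiniteDimensional ℝ 𝓧] {S : Type*} [Group S] [MulAction S 𝓧]
  {A : Type*} [Nonempty A]

/-- Subdifferential of a spectral function, set formula. -/
theorem spectral_function_subdifferential_formula
    (γ : 𝓗 → 𝓧) (Λ : A → 𝓧 →ₗ[ℝ] 𝓗) (τ : 𝓧 → 𝓧)
    (hsys : SpectralDecompositionSystem 𝓗 𝓧 S γ Λ τ)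
    (φ : 𝓧 → EReal) (hproper : ∃ x, φ x ≠ ⊤) (hbot : ∀ x, φ x ≠ ⊥)
    (hφ : ∀ (s : S) (x : 𝓧), φ (s • x) = φ x) (Z : 𝓗) :
    (subdifferential (fun W => φ (γ W)) Z =
      {W : 𝓗 | ∃ y ∈ subdifferential φ (γ Z), ∃ a : A, Z = Λ a (γ Z) ∧ W = Λ a y}) ∧
    ((∃ W₀ : 𝓗, subdifferential (fun W => φ (γ W)) Z = {W₀}) ↔
      (∃ y₀ : 𝓧, subdifferential φ (γ Z) = {y₀})) := by
  classical
  have hφτ : ∀ x : 𝓧, φ (τ x) = φ x := by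
    intro x; obtain ⟨s, hs⟩ := hsys.tau_orbit x; rw [hs, hφ]
  -- easy direction: each Λ a y is a subgradient of φ ∘ γ
  have hsup : ∀ (y : 𝓧), y ∈ subdifferential φ (γ Z) → ∀ a : A, Z = Λ a (γ Z) →
      Λ a y ∈ subdifferential (fun W => φ (γ W)) Z := by
    intro y hy a haZ
    simp only [subdifferential, Set.mem_setOf_eq] at hy ⊢
    intro z
    obtain ⟨s, hs⟩ := hsys.tau_orbit y
    have key := hy (s⁻¹ • γ z)
    have hinv : φ (s⁻¹ • γ z) = φ (γ z) := by
      have h := hφ s (s⁻¹ • γ z)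
      rw [smul_inv_smul] at h
      exact h.symm
    have e1 : ⟪Z, Λ a y⟫_ℝ = ⟪γ Z, y⟫_ℝ := by
      conv_lhs => rw [haZ]
      exact sds_inner_lambda hsys a (γ Z) y
    have e2 : ⟪z, Λ a y⟫_ℝ ≤ ⟪s⁻¹ • γ z, y⟫_ℝ := by
      calc ⟪z, Λ a y⟫_ℝ ≤ ⟪γ z, γ (Λ a y)⟫_ℝ := hsys.inner_le _ _
        _ = ⟪γ z, s • y⟫_ℝ := by rw [hsys.gamma_lambda, hs]
        _ = ⟪s⁻¹ • γ z, y⟫_ℝ := by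
            rw [← sds_inner_smul hsys s (s⁻¹ • γ z) y, smul_inv_smul]
    have hr1 : ⟪z - Z, Λ a y⟫_ℝ ≤ ⟪s⁻¹ • γ z - γ Z, y⟫_ℝ := by
      rw [inner_sub_left, inner_sub_left]
      linarith
    calc ((⟪z - Z, Λ a y⟫_ℝ : ℝ) : EReal) + φ (γ Z)
        ≤ ((⟪s⁻¹ • γ z - γ Z, y⟫_ℝ : ℝ) : EReal) + φ (γ Z) :=
          add_le_add_left (EReal.coe_le_coe_iff.mpr hr1) _
      _ ≤ φ (s⁻¹ • γ z) := key
      _ = φ (γ z) := hinv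
  -- hard direction
  have hsub : ∀ W, W ∈ subdifferential (fun W => φ (γ W)) Z →
      ∃ y ∈ subdifferential φ (γ Z), ∃ a : A, Z = Λ a (γ Z) ∧ W = Λ a y := by
    intro W hW
    simp only [subdifferential, Set.mem_setOf_eq] at hW
    by_cases htop : φ (γ Z) = ⊤
    · exfalso
      obtain ⟨x₀, hx₀⟩ := hproper
      obtain ⟨a₀⟩ := ‹Nonempty A›
      have key := hW (Λ a₀ x₀)
      rw [hsys.gamma_lambda, hφτ, htop, EReal.coe_add_top] at key
      exact hx₀ (top_le_iff.mp key)
    · have hrc : (((φ (γ Z)).toReal : ℝ) : EReal) = φ (γ Z) :=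
        EReal.coe_toReal htop (hbot _)
      -- step 1 : equality in the trace inequality
      obtain ⟨b, hb⟩ := hsys.exists_decomp W
      have key := hW (Λ b (γ Z))
      have hγ : γ (Λ b (γ Z)) = γ Z := by rw [hsys.gamma_lambda, sds_tau_gamma hsys]
      rw [hγ, ← hrc, ← EReal.coe_add, EReal.coe_le_coe_iff] at key
      have hreal : ⟪Λ b (γ Z), W⟫_ℝ ≤ ⟪Z, W⟫_ℝ := by
        rw [inner_sub_left] at key
        linarith
      have hZW : ⟪γ Z, γ W⟫_ℝ ≤ ⟪Z, W⟫_ℝ := by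
        have e3 : ⟪Λ b (γ Z), W⟫_ℝ = ⟪γ Z, γ W⟫_ℝ := by
          conv_lhs => rw [hb]
          exact sds_inner_lambda hsys b (γ Z) (γ W)
        linarith [e3 ▸ hreal]
      obtain ⟨a, haZ, haW⟩ := sds_simultaneous hsys Z W hZW
      refine ⟨γ W, ?_, a, haZ, haW⟩
      simp only [subdifferential, Set.mem_setOf_eq]
      intro x
      have key2 := hW (Λ a x)
      rw [hsys.gamma_lambda, hφτ] at key2
      have hip : ⟪Λ a x - Z, W⟫_ℝ = ⟪x - γ Z, γ W⟫_ℝ := by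
        conv_lhs => rw [haZ, haW]
        rw [← map_sub]
        exact sds_inner_lambda hsys a _ _
      rw [hip] at key2
      exact key2
  -- part (i)
  have hset : subdifferential (fun W => φ (γ W)) Z =
      {W : 𝓗 | ∃ y ∈ subdifferential φ (γ Z), ∃ a : A, Z = Λ a (γ Z) ∧ W = Λ a y} := by
    ext W
    simp only [Set.mem_setOf_eq]
    constructor
    · intro hW; exact hsub W hW
    · rintro ⟨y, hy, a, haZ, rfl⟩; exact hsup y hy a haZ
  refine ⟨hset, ?_, ?_⟩
  · -- singleton of LHS ⇒ singleton of ∂φ(γ Z)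
    rintro ⟨W₀, hW₀⟩
    have hmem : W₀ ∈ subdifferential (fun W => φ (γ W)) Z := by
      rw [hW₀]; exact Set.mem_singleton _
    obtain ⟨y, hy, a, haZ, hW0y⟩ := hsub W₀ hmem
    refine ⟨y, ?_⟩
    ext y'
    simp only [Set.mem_singleton_iff]
    constructor
    · intro hy'
      have h1 : Λ a y' ∈ subdifferential (fun W => φ (γ W)) Z := hsup y' hy' a haZ
      rw [hW₀, Set.mem_singleton_iff] at h1
      have h2 : Λ a y' = Λ a y := by rw [h1, hW0y]
      have hinj : ‖y' - y‖ = 0 := by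
        rw [← hsys.norm_lambda a, map_sub, h2, sub_self, norm_zero]
      rw [norm_eq_zero, sub_eq_zero] at hinj
      exact hinj
    · rintro rfl; exact hy
  · -- singleton of ∂φ(γ Z) ⇒ singleton of LHS
    rintro ⟨y₀, hy₀⟩
    have hy₀mem : y₀ ∈ subdifferential φ (γ Z) := by
      rw [hy₀]; exact Set.mem_singleton _
    obtain ⟨a₀, ha₀⟩ := hsys.exists_decomp Z
    refine ⟨Λ a₀ y₀, ?_⟩
    have hW₂ := hsup y₀ hy₀mem a₀ ha₀
    ext W
    simp only [Set.mem_singleton_iff]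
    constructor
    · intro hWmem
      obtain ⟨y, hy, a, haZ, hWy⟩ := hsub W hWmem
      have hyy : y = y₀ := by rw [hy₀, Set.mem_singleton_iff] at hy; exact hy
      subst hyy
      subst hWy
      -- midpoint argument : Λ a y = Λ a₀ y
      have hW₁ := hsup y hy a haZ
      set M := (2⁻¹ : ℝ) • (Λ a y + Λ a₀ y) with hM
      have hMmem : M ∈ subdifferential (fun W => φ (γ W)) Z := by
        simp only [subdifferential, Set.mem_setOf_eq] at hW₁ hW₂ ⊢
        intro z
        have k1 := hW₁ z
        have k2 := hW₂ z
        have hEq : ⟪z - Z, M⟫_ℝ = 2⁻¹ * (⟪z - Z, Λ a y⟫_ℝ + ⟪z - Z, Λ a₀ y⟫_ℝ) := by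
          rw [hM, real_inner_smul_right, inner_add_right]
        rcases le_total (⟪z - Z, Λ a y⟫_ℝ) (⟪z - Z, Λ a₀ y⟫_ℝ) with hle | hle
        · calc ((⟪z - Z, M⟫_ℝ : ℝ) : EReal) + φ (γ Z)
              ≤ ((⟪z - Z, Λ a₀ y⟫_ℝ : ℝ) : EReal) + φ (γ Z) := by
                refine add_le_add_left (EReal.coe_le_coe_iff.mpr ?_) _
                rw [hEq]; linarith
            _ ≤ φ (γ z) := k2
        · calc ((⟪z - Z, M⟫_ℝ : ℝ) : EReal) + φ (γ Z)
              ≤ ((⟪z - Z, Λ a y⟫_ℝ : ℝ) : EReal) + φ (γ Z) := by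
                refine add_le_add_left (EReal.coe_le_coe_iff.mpr ?_) _
                rw [hEq]; linarith
            _ ≤ φ (γ z) := k1
      obtain ⟨y', hy', c, hcZ, hMc⟩ := hsub M hMmem
      have hy'0 : y' = y := by rw [hy₀, Set.mem_singleton_iff] at hy'; exact hy'
      have hnM : ‖M‖ = ‖y‖ := by
        rw [hMc, hy'0, hsys.norm_lambda]
      have hn1 : ‖Λ a y‖ = ‖y‖ := hsys.norm_lambda _ _
      have hn2 : ‖Λ a₀ y‖ = ‖y‖ := hsys.norm_lambda _ _
      have hsumn : ‖Λ a y + Λ a₀ y‖ = 2 * ‖y‖ := by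
        have hS : ‖M‖ = 2⁻¹ * ‖Λ a y + Λ a₀ y‖ := by
          rw [hM, norm_smul]
          norm_num
        rw [hnM] at hS
        linarith
      have hdiff : ‖Λ a y - Λ a₀ y‖ ^ 2 ≤ 0 := by
        have hps := norm_add_sq_real (Λ a y) (Λ a₀ y)
        have hms := norm_sub_sq_real (Λ a y) (Λ a₀ y)
        rw [hsumn, hn1, hn2] at hps
        rw [hn1, hn2] at hms
        nlinarith [hps, hms]
      have h0 : Λ a y - Λ a₀ y = 0 := by
        have := le_antisymm hdiff (sq_nonneg _)
        rw [sq_eq_zero_iff, norm_eq_zero] at this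
        exact this
      exact sub_eq_zero.mp h0
    · rintro rfl
      exact hW₂
end

section
/- (Proximity operator and Moreau envelope of a spectral function.) Let 𝔥 be a Euclidean space with spectral decomposition system (𝒳, S, γ, (Λ_a)_{a∈A}), let φ : 𝒳 → (−∞, +∞] be proper (not identically +∞) and S-invariant (φ(s • x) = φ(x) for all s ∈ S, x ∈ 𝒳), and let X ∈ 𝔥. Set A_X = {a ∈ A : X = Λ_a(γ(X))}. Then: (i) inf_{Z ∈ 𝔥} ( φ(γ(Z)) + (1/2)‖Z − X‖² ) = inf_{z ∈ 𝒳} ( φ(z) + (1/2)‖z − γ(X)‖² ); and (ii) Argmin_{Z ∈ 𝔥} ( φ(γ(Z)) + (1/2)‖Z − X‖² ) = { Λ_a z : z ∈ Argmin_{w ∈ 𝒳} ( φ(w) + (1/2)‖w − γ(X)‖² ), a ∈ A_X }. -/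
open scoped InnerProductSpace

section Aux

variable {𝓗 𝓧 : Type*} [NormedAddCommGroup 𝓗] [InnerProductSpace ℝ 𝓗]
  [NormedAddCommGroup 𝓧] [InnerProductSpace ℝ 𝓧]
  {S : Type*} [Group S] [MulAction S 𝓧] {A : Type*}
  {γ : 𝓗 → 𝓧} {Λ : A → 𝓧 →ₗ[ℝ] 𝓗} {τ : 𝓧 → 𝓧}

lemma SDS.norm_gamma (hsys : SpectralDecompositionSystem 𝓗 𝓧 S γ Λ τ) (X : 𝓗) :
    ‖γ X‖ = ‖X‖ := by
  obtain ⟨a, hX⟩ := hsys.exists_decomp X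
  conv_rhs => rw [hX, hsys.norm_lambda]

lemma SDS.tau_gamma (hsys : SpectralDecompositionSystem 𝓗 𝓧 S γ Λ τ) (X : 𝓗) :
    τ (γ X) = γ X := by
  obtain ⟨a, hX⟩ := hsys.exists_decomp X
  have := hsys.gamma_lambda a (γ X)
  rw [← hX] at this
  exact this.symm

lemma SDS.simul (hsys : SpectralDecompositionSystem 𝓗 𝓧 S γ Λ τ) (W Z : 𝓗)
    (h : ⟪W, Z⟫_ℝ = ⟪γ W, γ Z⟫_ℝ) :
    ∃ a : A, W = Λ a (γ W) ∧ Z = Λ a (γ Z) := by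
  obtain ⟨a, hV⟩ := hsys.exists_decomp (W + Z)
  have hnW := SDS.norm_gamma hsys W
  have hnZ := SDS.norm_gamma hsys Z
  have hnV := SDS.norm_gamma hsys (W + Z)
  have h1 : ⟪W + Z, W⟫_ℝ ≤ ⟪γ (W + Z), γ W⟫_ℝ := hsys.inner_le _ _
  have h2 : ⟪W + Z, Z⟫_ℝ ≤ ⟪γ (W + Z), γ Z⟫_ℝ := hsys.inner_le _ _
  have sum1 : ⟪W + Z, W⟫_ℝ + ⟪W + Z, Z⟫_ℝ = ‖W + Z‖ ^ 2 := by
    rw [← inner_add_right, real_inner_self_eq_norm_sq]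
  have n2 : ‖γ W + γ Z‖ ^ 2 = ‖W + Z‖ ^ 2 := by
    rw [norm_add_sq_real, norm_add_sq_real, hnW, hnZ, ← h]
  have hadd : γ (W + Z) = γ W + γ Z := by
    have expand := norm_sub_sq_real (γ (W + Z)) (γ W + γ Z)
    have i1 : ⟪γ (W + Z), γ W + γ Z⟫_ℝ
        = ⟪γ (W + Z), γ W⟫_ℝ + ⟪γ (W + Z), γ Z⟫_ℝ := inner_add_right _ _ _
    have e1 : ‖γ (W + Z) - (γ W + γ Z)‖ ^ 2 ≤ 0 := by
      rw [expand, i1, hnV, n2]; linarith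
    have e2 : ‖γ (W + Z) - (γ W + γ Z)‖ = 0 := by
      nlinarith [norm_nonneg (γ (W + Z) - (γ W + γ Z))]
    rw [← sub_eq_zero]
    exact norm_eq_zero.mp e2
  rw [hadd, map_add] at hV
  have hτW := SDS.tau_gamma hsys W
  have hτZ := SDS.tau_gamma hsys Z
  have j1 : ⟪Λ a (γ W), W⟫_ℝ ≤ ‖W‖ ^ 2 := by
    have := hsys.inner_le (Λ a (γ W)) W
    rw [hsys.gamma_lambda, hτW, real_inner_self_eq_norm_sq, hnW] at this
    exact this
  have j2 : ⟪Λ a (γ Z), W⟫_ℝ ≤ ⟪W, Z⟫_ℝ := by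
    have := hsys.inner_le (Λ a (γ Z)) W
    rw [hsys.gamma_lambda, hτZ] at this
    calc ⟪Λ a (γ Z), W⟫_ℝ ≤ ⟪γ Z, γ W⟫_ℝ := this
      _ = ⟪γ W, γ Z⟫_ℝ := real_inner_comm _ _
      _ = ⟪W, Z⟫_ℝ := h.symm
  have j1' : ⟪Λ a (γ Z), Z⟫_ℝ ≤ ‖Z‖ ^ 2 := by
    have := hsys.inner_le (Λ a (γ Z)) Z
    rw [hsys.gamma_lambda, hτZ, real_inner_self_eq_norm_sq, hnZ] at this
    exact this
  have j2' : ⟪Λ a (γ W), Z⟫_ℝ ≤ ⟪W, Z⟫_ℝ := by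
    have := hsys.inner_le (Λ a (γ W)) Z
    rw [hsys.gamma_lambda, hτW] at this
    rw [h]
    exact this
  have jsumW : ⟪Λ a (γ W), W⟫_ℝ + ⟪Λ a (γ Z), W⟫_ℝ = ‖W‖ ^ 2 + ⟪W, Z⟫_ℝ := by
    rw [← inner_add_left, ← hV, inner_add_left, real_inner_self_eq_norm_sq,
      real_inner_comm Z W]
  have jsumZ : ⟪Λ a (γ W), Z⟫_ℝ + ⟪Λ a (γ Z), Z⟫_ℝ = ⟪W, Z⟫_ℝ + ‖Z‖ ^ 2 := by
    rw [← inner_add_left, ← hV, inner_add_left, real_inner_self_eq_norm_sq]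
  have kW : ⟪Λ a (γ W), W⟫_ℝ = ‖W‖ ^ 2 := by linarith
  have kZ : ⟪Λ a (γ Z), Z⟫_ℝ = ‖Z‖ ^ 2 := by linarith
  refine ⟨a, ?_, ?_⟩
  · have hsq : ‖W - Λ a (γ W)‖ ^ 2 = 0 := by
      rw [norm_sub_sq_real, hsys.norm_lambda, hnW, real_inner_comm, kW]; ring
    have hz : ‖W - Λ a (γ W)‖ = 0 := pow_eq_zero_iff two_ne_zero |>.mp hsq
    have hz2 : W - Λ a (γ W) = 0 := norm_eq_zero.mp hz
    rw [← sub_eq_zero]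
    exact hz2
  · have hsq : ‖Z - Λ a (γ Z)‖ ^ 2 = 0 := by
      rw [norm_sub_sq_real, hsys.norm_lambda, hnZ, real_inner_comm, kZ]; ring
    have hz : ‖Z - Λ a (γ Z)‖ = 0 := pow_eq_zero_iff two_ne_zero |>.mp hsq
    have hz2 : Z - Λ a (γ Z) = 0 := norm_eq_zero.mp hz
    rw [← sub_eq_zero]
    exact hz2

end Aux

variable {𝓗 𝓧 : Type*} [NormedAddCommGroup 𝓗] [InnerProductSpace ℝ 𝓗]
  [FiniteDimensional ℝ 𝓗] [NormedAddCommGroup 𝓧] [InnerProductSpace ℝ 𝓧]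
  [FiniteDimensional ℝ 𝓧] {S : Type*} [Group S] [MulAction S 𝓧]
  {A : Type*} [Nonempty A]

/-- `Argmin g` is the set of minimizers of `g` if `inf g < +∞`, and `∅` otherwise. -/
def ArgminE {V : Type*} (g : V → EReal) : Set V :=
  {x | (⨅ y, g y) < ⊤ ∧ g x = ⨅ y, g y}

/-- Proximity operator and Moreau envelope of a spectral function. -/
theorem spectral_function_prox_and_moreau
    (γ : 𝓗 → 𝓧) (Λ : A → 𝓧 →ₗ[ℝ] 𝓗) (τ : 𝓧 → 𝓧)
    (hsys : SpectralDecompositionSystem 𝓗 𝓧 S γ Λ τ)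
    (φ : 𝓧 → EReal) (hproper : ∃ x, φ x ≠ ⊤) (hbot : ∀ x, φ x ≠ ⊥)
    (hφ : ∀ (s : S) (x : 𝓧), φ (s • x) = φ x) (Z : 𝓗) :
    (⨅ W : 𝓗, (φ (γ W) + ((‖W - Z‖ ^ 2 / 2 : ℝ) : EReal)) =
      ⨅ w : 𝓧, (φ w + ((‖w - γ Z‖ ^ 2 / 2 : ℝ) : EReal))) ∧
    (ArgminE (fun W => φ (γ W) + ((‖W - Z‖ ^ 2 / 2 : ℝ) : EReal)) =
      {W : 𝓗 | ∃ w ∈ ArgminE (fun v => φ v + ((‖v - γ Z‖ ^ 2 / 2 : ℝ) : EReal)),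
        ∃ a : A, Z = Λ a (γ Z) ∧ W = Λ a w}) := by
  have hφτ : ∀ x : 𝓧, φ (τ x) = φ x := by
    intro x
    obtain ⟨s, hs⟩ := hsys.tau_orbit x
    rw [hs, hφ]
  -- value of the objective on decomposed points
  have hFΛ : ∀ (a : A), Z = Λ a (γ Z) → ∀ w : 𝓧,
      φ (γ (Λ a w)) + ((‖Λ a w - Z‖ ^ 2 / 2 : ℝ) : EReal)
        = φ w + ((‖w - γ Z‖ ^ 2 / 2 : ℝ) : EReal) := by
    intro a ha w
    have hn : ‖Λ a w - Z‖ = ‖w - γ Z‖ := by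
      calc ‖Λ a w - Z‖ = ‖Λ a (w - γ Z)‖ := by rw [map_sub, ← ha]
        _ = ‖w - γ Z‖ := hsys.norm_lambda a _
    rw [hsys.gamma_lambda, hφτ, hn]
  -- the norm-squared contraction inequality
  have hnle : ∀ W : 𝓗, ‖γ W - γ Z‖ ^ 2 ≤ ‖W - Z‖ ^ 2 := by
    intro W
    have h1 := hsys.inner_le W Z
    have e1 := norm_sub_sq_real (γ W) (γ Z)
    have e2 := norm_sub_sq_real W Z
    rw [SDS.norm_gamma hsys, SDS.norm_gamma hsys] at e1
    linarith
  have hmono : ∀ W : 𝓗,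
      φ (γ W) + ((‖γ W - γ Z‖ ^ 2 / 2 : ℝ) : EReal)
        ≤ φ (γ W) + ((‖W - Z‖ ^ 2 / 2 : ℝ) : EReal) := by
    intro W
    exact add_le_add le_rfl (EReal.coe_le_coe_iff.mpr (by linarith [hnle W]))
  obtain ⟨a₀, ha₀⟩ := hsys.exists_decomp Z
  have hinf : (⨅ W : 𝓗, (φ (γ W) + ((‖W - Z‖ ^ 2 / 2 : ℝ) : EReal)))
      = ⨅ w : 𝓧, (φ w + ((‖w - γ Z‖ ^ 2 / 2 : ℝ) : EReal)) := by
    apply le_antisymm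
    · refine le_iInf fun w => ?_
      calc (⨅ W : 𝓗, (φ (γ W) + ((‖W - Z‖ ^ 2 / 2 : ℝ) : EReal)))
          ≤ φ (γ (Λ a₀ w)) + ((‖Λ a₀ w - Z‖ ^ 2 / 2 : ℝ) : EReal) := iInf_le _ _
        _ = φ w + ((‖w - γ Z‖ ^ 2 / 2 : ℝ) : EReal) := hFΛ a₀ ha₀ w
    · refine le_iInf fun W => ?_
      calc (⨅ w : 𝓧, (φ w + ((‖w - γ Z‖ ^ 2 / 2 : ℝ) : EReal)))
          ≤ φ (γ W) + ((‖γ W - γ Z‖ ^ 2 / 2 : ℝ) : EReal) := iInf_le _ _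
        _ ≤ φ (γ W) + ((‖W - Z‖ ^ 2 / 2 : ℝ) : EReal) := hmono W
  refine ⟨hinf, ?_⟩
  ext W
  simp only [ArgminE, Set.mem_setOf_eq]
  constructor
  · rintro ⟨hlt, hmin⟩
    have hlt' : (⨅ w : 𝓧, (φ w + ((‖w - γ Z‖ ^ 2 / 2 : ℝ) : EReal))) < ⊤ := hinf ▸ hlt
    have hFW_lt : φ (γ W) + ((‖W - Z‖ ^ 2 / 2 : ℝ) : EReal) < ⊤ := hmin ▸ hlt
    have hφtop : φ (γ W) ≠ ⊤ := by
      intro h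
      rw [h, EReal.top_add_coe] at hFW_lt
      exact lt_irrefl _ hFW_lt
    -- γ W is a minimizer and the values agree
    have hle1 : (⨅ w : 𝓧, (φ w + ((‖w - γ Z‖ ^ 2 / 2 : ℝ) : EReal)))
        ≤ φ (γ W) + ((‖γ W - γ Z‖ ^ 2 / 2 : ℝ) : EReal) := iInf_le _ _
    have hle2 := hmono W
    have heq : φ (γ W) + ((‖γ W - γ Z‖ ^ 2 / 2 : ℝ) : EReal)
        = φ (γ W) + ((‖W - Z‖ ^ 2 / 2 : ℝ) : EReal) := by
      apply le_antisymm hle2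
      calc φ (γ W) + ((‖W - Z‖ ^ 2 / 2 : ℝ) : EReal)
          = ⨅ w : 𝓧, (φ w + ((‖w - γ Z‖ ^ 2 / 2 : ℝ) : EReal)) := hmin.trans hinf
        _ ≤ _ := hle1
    have hwmin : φ (γ W) + ((‖γ W - γ Z‖ ^ 2 / 2 : ℝ) : EReal)
        = ⨅ w : 𝓧, (φ w + ((‖w - γ Z‖ ^ 2 / 2 : ℝ) : EReal)) := by
      rw [heq]; exact hmin.trans hinf
    -- cancel to get equality of the quadratic terms
    have hcancel : ‖γ W - γ Z‖ ^ 2 / 2 = ‖W - Z‖ ^ 2 / 2 := by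
      lift φ (γ W) to ℝ using ⟨hφtop, hbot _⟩ with t ht
      rw [← EReal.coe_add, ← EReal.coe_add, EReal.coe_eq_coe_iff] at heq
      linarith
    -- deduce equality of inner products
    have hinner : ⟪W, Z⟫_ℝ = ⟪γ W, γ Z⟫_ℝ := by
      have e1 := norm_sub_sq_real (γ W) (γ Z)
      have e2 := norm_sub_sq_real W Z
      rw [SDS.norm_gamma hsys, SDS.norm_gamma hsys] at e1
      linarith
    obtain ⟨a, haW, haZ⟩ := SDS.simul hsys W Z hinner
    exact ⟨γ W, ⟨hlt', hwmin⟩, a, haZ, haW⟩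
  · rintro ⟨w, ⟨hwlt, hwmin⟩, a, haZ, rfl⟩
    refine ⟨hinf ▸ hwlt, ?_⟩
    rw [hFΛ a haZ w, hwmin, hinf]
end
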